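/- Take k = N. For all a ≠ b in {1,…,N}, the highest-configuration vector satisfies (E_{ab}E_{ba} − E_{aa}) (e_1 ⊗ ⋯ ⊗ e_N) = (−1)^{p(b)} P_{ab} (e_1 ⊗ ⋯ ⊗ e_N), where P_{ab} is the graded permutation of tensor slots a and b. -/

import Mathlib

open Finset

namespace Glnm

/-- Parity: `p(a) = 0` for bosonic indices (`a ≤ n` in 1-based terms, i.e. `a.val < n`),
`p(a) = 1` for fermionic ones. -/
def par (n N : ℕ) (a : Fin N) : ℕ := if (a : ℕ) < n then 0 else 1

/-- The Koszul-sign realization `e^{(j)}_{ab} = σ^{p(a)+p(b)} ⊗ ⋯ ⊗ σ^{p(a)+p(b)} ⊗ e_{ab} ⊗ I ⊗ ⋯ ⊗ I`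
on `(ℂ^N)^{⊗k}`, realized as matrices indexed by tuples `Fin k → Fin N`. -/
noncomputable def eop (n N k : ℕ) (j : Fin k) (a b : Fin N) :
    Matrix (Fin k → Fin N) (Fin k → Fin N) ℂ :=
  fun x y =>
    (if x j = a ∧ y j = b then (1 : ℂ) else 0) *
      (-1 : ℂ) ^ ((par n N a + par n N b) *
        ∑ l ∈ Finset.univ.filter (fun l : Fin k => l < j), par n N (x l)) *
      ∏ l ∈ Finset.univ.filter (fun l : Fin k => l ≠ j),
        (if x l = y l then (1 : ℂ) else 0)

/-- `E_{ab} = ∑_{j=1}^k e^{(j)}_{ab}`. -/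
noncomputable def Egen (n N k : ℕ) (a b : Fin N) : Matrix (Fin k → Fin N) (Fin k → Fin N) ℂ :=
  ∑ j : Fin k, eop n N k j a b

/-- The graded permutation `P_{ij} = ∑_{a,b} (−1)^{p(b)} e^{(i)}_{ab} e^{(j)}_{ba}`. -/
noncomputable def Pg (n N k : ℕ) (i j : Fin k) : Matrix (Fin k → Fin N) (Fin k → Fin N) ℂ :=
  ∑ a : Fin N, ∑ b : Fin N,
    ((-1 : ℂ) ^ par n N b) • (eop n N k i a b * eop n N k j b a)

/-- Commutator. -/
def comm {α : Type*} [Ring α] (X Y : α) : α := X * Y - Y * X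

/-- Anticommutator. -/
def acomm {α : Type*} [Ring α] (X Y : α) : α := X * Y + Y * X

/-- The dynamical connection matrix
`A_a = ∑_j z_j e^{(j)}_{aa} + ∑_{b ≠ a} (−1)^{p(b)} (E_{ab}E_{ba} − E_{aa})/(λ_a − λ_b)`. -/
noncomputable def dynA (n N k : ℕ) (z : Fin k → ℂ) (lam : Fin N → ℂ) (a : Fin N) :
    Matrix (Fin k → Fin N) (Fin k → Fin N) ℂ :=
  (∑ j : Fin k, z j • eop n N k j a a) +
    ∑ b ∈ Finset.univ.filter (fun b : Fin N => b ≠ a),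
      (((-1 : ℂ) ^ par n N b) / (lam a - lam b)) •
        (Egen n N k a b * Egen n N k b a - Egen n N k a a)

/-- The (twisted) KZ connection matrix
`B_i = ∑_c λ_c e^{(i)}_{cc} + ∑_{j ≠ i} P_{ij}/(z_i − z_j)`. -/
noncomputable def kzB (n N k : ℕ) (z : Fin k → ℂ) (lam : Fin N → ℂ) (i : Fin k) :
    Matrix (Fin k → Fin N) (Fin k → Fin N) ℂ :=
  (∑ c : Fin N, lam c • eop n N k i c c) +
    ∑ j ∈ Finset.univ.filter (fun j : Fin k => j ≠ i),
      ((z i - z j)⁻¹) • Pg n N k i j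

/-- Adjacent graded permutation `P_{s_l} = P_{l,l+1}` (0-based slots). -/
noncomputable def Ps (n N k : ℕ) (l : ℕ) (h : l + 1 < k) :
    Matrix (Fin k → Fin N) (Fin k → Fin N) ℂ :=
  Pg n N k ⟨l, Nat.lt_of_succ_lt h⟩ ⟨l + 1, h⟩

/-- The highest-configuration vector `e_1 ⊗ ⋯ ⊗ e_N ∈ (ℂ^N)^{⊗N}`. -/
noncomputable def baseVec (N : ℕ) : (Fin N → Fin N) → ℂ :=
  fun x => if x = (fun j => j) then 1 else 0

/-- `Ω^i = ∑_{σ ∈ S_N} (−1)^{i·ℓ(σ)} P_σ (e_1 ⊗ ⋯ ⊗ e_N)`, where `P_σ = ρ σ` for the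
(unique) multiplicative extension `ρ` of the adjacent graded permutations. -/
noncomputable def OmegaVec (N : ℕ) (i : ℕ)
    (ρ : Equiv.Perm (Fin N) →* Matrix (Fin N → Fin N) (Fin N → Fin N) ℂ) :
    (Fin N → Fin N) → ℂ :=
  ∑ σ : Equiv.Perm (Fin N),
    (((Equiv.Perm.sign σ : ℤ) : ℂ) ^ i) • Matrix.mulVec (ρ σ) (baseVec N)

/-- The set of `(z, λ)` with pairwise distinct `z`'s and pairwise distinct `λ`'s. -/
def Usep (N : ℕ) : Set ((Fin N → ℂ) × (Fin N → ℂ)) :=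
  {p | (∀ i j : Fin N, i ≠ j → p.1 i ≠ p.1 j) ∧ (∀ a b : Fin N, a ≠ b → p.2 a ≠ p.2 b)}

end Glnm

section Aux

open Finset Glnm

namespace GlnmAux

/-- The identity tuple. -/
def idf (N : ℕ) : Fin N → Fin N := fun l => l

/-- One-point modification of the identity tuple. -/
def U (N : ℕ) (j c : Fin N) : Fin N → Fin N := fun l => if l = j then c else l

/-- The swap tuple. -/
def T (N : ℕ) (a b : Fin N) : Fin N → Fin N :=
  fun l => if l = a then b else if l = b then a else l

/-- Partial parity sum along the identity. -/
def S (n N : ℕ) (j : Fin N) : ℕ :=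
  ∑ l ∈ Finset.univ.filter (fun l : Fin N => l < j), par n N l

/-- Partial parity sum along the swap tuple, up to `b`. -/
def X (n N : ℕ) (a b : Fin N) : ℕ :=
  ∑ l ∈ Finset.univ.filter (fun l : Fin N => l < b), par n N (T N a b l)

/-- Partial parity sum along the swap tuple, up to `a`. -/
def Y (n N : ℕ) (a b : Fin N) : ℕ :=
  ∑ l ∈ Finset.univ.filter (fun l : Fin N => l < a), par n N (T N a b l)

lemma par_cases (n N : ℕ) (a : Fin N) : par n N a = 0 ∨ par n N a = 1 := by
  unfold par; split <;> simp

lemma neg_one_pow_eq (i j : ℕ) (h : i % 2 = j % 2) : (-1 : ℂ) ^ i = (-1 : ℂ) ^ j := by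
  conv_lhs => rw [← Nat.div_add_mod i 2]
  conv_rhs => rw [← Nat.div_add_mod j 2]
  rw [pow_add, pow_add, pow_mul, pow_mul]
  norm_num [h]

lemma mulVec_base {N : ℕ} (M : Matrix (Fin N → Fin N) (Fin N → Fin N) ℂ)
    (x : Fin N → Fin N) : M.mulVec (baseVec N) x = M x (idf N) := by
  simp only [Matrix.mulVec, dotProduct, baseVec, mul_ite, mul_one, mul_zero]
  rw [Finset.sum_ite_eq' Finset.univ (fun j => j : Fin N → Fin N) (fun y => M x y)]
  simp only [Finset.mem_univ, if_true]
  rfl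

lemma eop_ne {n N : ℕ} (j c d : Fin N) (h : j ≠ d) (y : Fin N → Fin N) :
    eop n N N j c d y (idf N) = 0 := by
  simp [eop, idf, h]

lemma eop_id {n N : ℕ} (j c : Fin N) (y : Fin N → Fin N) :
    eop n N N j c j y (idf N) =
      if y = U N j c then (-1 : ℂ) ^ ((par n N c + par n N j) * S n N j) else 0 := by
  by_cases hy : y = U N j c
  · subst hy
    rw [if_pos rfl]
    unfold eop
    have hprod : ∏ l ∈ Finset.univ.filter (fun l : Fin N => l ≠ j),
        (if U N j c l = idf N l then (1 : ℂ) else 0) = 1 := by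
      apply Finset.prod_eq_one
      intro l hl
      simp only [mem_filter] at hl
      simp [U, idf, hl.2]
    have hsum : ∑ l ∈ Finset.univ.filter (fun l : Fin N => l < j), par n N (U N j c l)
        = S n N j := by
      apply Finset.sum_congr rfl
      intro l hl
      simp only [mem_filter] at hl
      have hlj : l ≠ j := ne_of_lt hl.2
      simp [U, hlj]
    rw [hprod, hsum]
    simp [U, idf]
  · rw [if_neg hy]
    obtain ⟨l, hl⟩ := Function.ne_iff.mp hy
    unfold eop
    by_cases hlj : l = j
    · subst hlj
      have hc : y l ≠ c := by simpa [U] using hl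
      simp [idf, hc]
    · have hfac : (if y l = idf N l then (1 : ℂ) else 0) = 0 := by
        have : y l ≠ l := by simpa [U, hlj] using hl
        simp [idf, this]
      have hprod : ∏ l' ∈ Finset.univ.filter (fun l' : Fin N => l' ≠ j),
          (if y l' = idf N l' then (1 : ℂ) else 0) = 0 :=
        Finset.prod_eq_zero (by simp [hlj]) hfac
      simp [hprod]

lemma Egen_id {n N : ℕ} (c d : Fin N) (y : Fin N → Fin N) :
    Egen n N N c d y (idf N) =
      if y = U N d c then (-1 : ℂ) ^ ((par n N c + par n N d) * S n N d) else 0 := by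
  unfold Egen
  rw [Matrix.sum_apply]
  rw [Finset.sum_eq_single d]
  · exact eop_id d c y
  · intro j _ hj; exact eop_ne j c d hj y
  · simp

lemma Egen_aa {n N : ℕ} (a : Fin N) (x : Fin N → Fin N) :
    Egen n N N a a x (idf N) = if x = idf N then 1 else 0 := by
  rw [Egen_id]
  have hU : U N a a = idf N := by
    funext l; by_cases h : l = a <;> simp [U, idf, h]
  have hpow : (-1 : ℂ) ^ ((par n N a + par n N a) * S n N a) = 1 := by
    have h2 : (par n N a + par n N a) * S n N a = 2 * (par n N a * S n N a) := by ring
    rw [h2, pow_mul]; norm_num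
  rw [hU, hpow]

lemma Egen_abU {n N : ℕ} (a b : Fin N) (hab : a ≠ b) (x : Fin N → Fin N) :
    Egen n N N a b x (U N a b) =
      (if x = idf N then (-1 : ℂ) ^ ((par n N a + par n N b) * S n N a) else 0)
        + (if x = T N a b then (-1 : ℂ) ^ ((par n N a + par n N b) * X n N a b) else 0) := by
  unfold Egen
  rw [Matrix.sum_apply]
  rw [← Finset.sum_subset (Finset.subset_univ ({a, b} : Finset (Fin N)))
      (by
        intro j _ hj
        simp only [mem_insert, mem_singleton, not_or] at hj
        simp [eop, U, hj.1, hj.2])]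
  rw [Finset.sum_pair hab]
  congr 1
  · -- slot a term
    by_cases hx : x = idf N
    · subst hx
      rw [if_pos rfl]
      unfold eop
      have hprod : ∏ l ∈ Finset.univ.filter (fun l : Fin N => l ≠ a),
          (if idf N l = U N a b l then (1 : ℂ) else 0) = 1 := by
        apply Finset.prod_eq_one
        intro l hl
        simp only [mem_filter] at hl
        simp [U, idf, hl.2]
      have hsum : ∑ l ∈ Finset.univ.filter (fun l : Fin N => l < a), par n N (idf N l)
          = S n N a := by
        apply Finset.sum_congr rfl
        intro l _; rfl
      rw [hprod, hsum]
      simp [U, idf]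
    · rw [if_neg hx]
      obtain ⟨l, hl⟩ := Function.ne_iff.mp hx
      unfold eop
      by_cases hla : l = a
      · rw [hla] at hl
        have hc : x a ≠ a := by simpa [idf] using hl
        simp [hc]
      · have hfac : (if x l = U N a b l then (1 : ℂ) else 0) = 0 := by
          have : x l ≠ l := by simpa [idf] using hl
          simp [U, hla, this]
        have hprod : ∏ l' ∈ Finset.univ.filter (fun l' : Fin N => l' ≠ a),
            (if x l' = U N a b l' then (1 : ℂ) else 0) = 0 :=
          Finset.prod_eq_zero (by simp [hla]) hfac
        simp [hprod]
  · -- slot b term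
    have hba : b ≠ a := Ne.symm hab
    by_cases hx : x = T N a b
    · subst hx
      rw [if_pos rfl]
      unfold eop
      have hprod : ∏ l ∈ Finset.univ.filter (fun l : Fin N => l ≠ b),
          (if T N a b l = U N a b l then (1 : ℂ) else 0) = 1 := by
        apply Finset.prod_eq_one
        intro l hl
        simp only [mem_filter] at hl
        simp [T, U, hl.2]
      have hsum : ∑ l ∈ Finset.univ.filter (fun l : Fin N => l < b), par n N (T N a b l)
          = X n N a b := rfl
      rw [hprod, hsum]
      simp [T, U, hba]
    · rw [if_neg hx]
      obtain ⟨l, hl⟩ := Function.ne_iff.mp hx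
      unfold eop
      by_cases hlb : l = b
      · rw [hlb] at hl
        have hc : x b ≠ a := by simpa [T, hba] using hl
        simp [hc]
      · have hfac : (if x l = U N a b l then (1 : ℂ) else 0) = 0 := by
          have : x l ≠ U N a b l := by
            intro h; apply hl
            rw [h]; simp [T, U, hlb]
          simp [this]
        have hprod : ∏ l' ∈ Finset.univ.filter (fun l' : Fin N => l' ≠ b),
            (if x l' = U N a b l' then (1 : ℂ) else 0) = 0 :=
          Finset.prod_eq_zero (by simp [hlb]) hfac
        simp [hprod]

lemma eop_swap {n N : ℕ} (a b : Fin N) (hab : a ≠ b) (x : Fin N → Fin N) :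
    eop n N N a b a x (U N b a) =
      if x = T N a b then (-1 : ℂ) ^ ((par n N b + par n N a) * Y n N a b) else 0 := by
  have hba : b ≠ a := Ne.symm hab
  by_cases hx : x = T N a b
  · subst hx
    rw [if_pos rfl]
    unfold eop
    have hprod : ∏ l ∈ Finset.univ.filter (fun l : Fin N => l ≠ a),
        (if T N a b l = U N b a l then (1 : ℂ) else 0) = 1 := by
      apply Finset.prod_eq_one
      intro l hl
      simp only [mem_filter] at hl
      simp [T, U, hl.2]
    have hsum : ∑ l ∈ Finset.univ.filter (fun l : Fin N => l < a), par n N (T N a b l)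
        = Y n N a b := rfl
    rw [hprod, hsum]
    simp [T, U, hab]
  · rw [if_neg hx]
    obtain ⟨l, hl⟩ := Function.ne_iff.mp hx
    unfold eop
    by_cases hla : l = a
    · rw [hla] at hl
      have hc : x a ≠ b := by simpa [T] using hl
      simp [hc]
    · have hfac : (if x l = U N b a l then (1 : ℂ) else 0) = 0 := by
        have : x l ≠ U N b a l := by
          intro h; apply hl
          rw [h]; simp [T, U, hla]
        simp [this]
      have hprod : ∏ l' ∈ Finset.univ.filter (fun l' : Fin N => l' ≠ a),
          (if x l' = U N b a l' then (1 : ℂ) else 0) = 0 :=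
        Finset.prod_eq_zero (by simp [hla]) hfac
      simp [hprod]

lemma lhs_eval {n N : ℕ} (a b : Fin N) (x : Fin N → Fin N) :
    (Egen n N N a b * Egen n N N b a) x (idf N) =
      Egen n N N a b x (U N a b) * (-1 : ℂ) ^ ((par n N b + par n N a) * S n N a) := by
  rw [Matrix.mul_apply]
  rw [Finset.sum_eq_single (U N a b)]
  · rw [Egen_id]; simp
  · intro y _ hy; rw [Egen_id]; simp [hy]
  · simp

lemma eop_col_ne {n N : ℕ} (a b d : Fin N) (hab : a ≠ b) (hd : d ≠ a) (x : Fin N → Fin N) :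
    eop n N N a b d x (U N b d) = 0 := by
  have : U N b d a ≠ d := by simp [U, hab, Ne.symm hd]
  simp [eop, this]

lemma rhs_eval {n N : ℕ} (a b : Fin N) (hab : a ≠ b) (x : Fin N → Fin N) :
    Pg n N N a b x (idf N) =
      (-1 : ℂ) ^ par n N a *
        (eop n N N a b a x (U N b a) * (-1 : ℂ) ^ ((par n N a + par n N b) * S n N b)) := by
  unfold Pg
  simp only [Matrix.sum_apply, Matrix.smul_apply, Matrix.mul_apply, smul_eq_mul]
  rw [Finset.sum_eq_single b]
  · rw [Finset.sum_eq_single a]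
    · congr 1
      rw [Finset.sum_eq_single (U N b a)]
      · rw [eop_id]; simp
      · intro y _ hy; rw [eop_id]; simp [hy]
      · simp
    · intro d _ hd
      have h0 : ∑ y : Fin N → Fin N, eop n N N a b d x y * eop n N N b d b y (idf N) = 0 := by
        rw [Finset.sum_eq_single (U N b d)]
        · rw [eop_col_ne a b d hab hd]; simp
        · intro y _ hy; rw [eop_id]; simp [hy]
        · simp
      rw [h0]; ring
    · simp
  · intro c _ hc
    apply Finset.sum_eq_zero
    intro d _
    have h0 : ∀ y : Fin N → Fin N, eop n N N b d c y (idf N) = 0 := fun y =>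
      eop_ne b d c (Ne.symm hc) y
    simp [h0]
  · simp

end GlnmAux

end Aux

section Main

open Finset Glnm GlnmAux

lemma GlnmAux.key_lt {n N : ℕ} (a b : Fin N) (hlt : a < b) :
    X n N a b + par n N a = S n N b + par n N b ∧ Y n N a b = S n N a := by
  constructor
  · have ha : a ∈ Finset.univ.filter (fun l : Fin N => l < b) := by simp [hlt]
    have hcong : ∑ l ∈ (Finset.univ.filter (fun l : Fin N => l < b)).erase a,
        par n N (T N a b l) =
        ∑ l ∈ (Finset.univ.filter (fun l : Fin N => l < b)).erase a, par n N l := by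
      apply Finset.sum_congr rfl
      intro l hl
      simp only [mem_erase, mem_filter] at hl
      have hlb : l ≠ b := ne_of_lt hl.2.2
      simp [T, hl.1, hlb]
    have h1 := Finset.add_sum_erase (Finset.univ.filter (fun l : Fin N => l < b))
      (fun l => par n N (T N a b l)) ha
    have h2 := Finset.add_sum_erase (Finset.univ.filter (fun l : Fin N => l < b))
      (fun l => par n N l) ha
    have hTa : T N a b a = b := by simp [T]
    rw [hTa, hcong] at h1
    unfold X S
    omega
  · apply Finset.sum_congr rfl
    intro l hl
    simp only [mem_filter] at hl
    have hla : l ≠ a := ne_of_lt hl.2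
    have hlb : l ≠ b := ne_of_lt (lt_trans hl.2 hlt)
    simp [T, hla, hlb]

lemma GlnmAux.key_gt {n N : ℕ} (a b : Fin N) (hlt : b < a) :
    Y n N a b + par n N b = S n N a + par n N a ∧ X n N a b = S n N b := by
  constructor
  · have hb : b ∈ Finset.univ.filter (fun l : Fin N => l < a) := by simp [hlt]
    have hcong : ∑ l ∈ (Finset.univ.filter (fun l : Fin N => l < a)).erase b,
        par n N (T N a b l) =
        ∑ l ∈ (Finset.univ.filter (fun l : Fin N => l < a)).erase b, par n N l := by
      apply Finset.sum_congr rfl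
      intro l hl
      simp only [mem_erase, mem_filter] at hl
      have hla : l ≠ a := ne_of_lt hl.2.2
      simp [T, hl.1, hla]
    have h1 := Finset.add_sum_erase (Finset.univ.filter (fun l : Fin N => l < a))
      (fun l => par n N (T N a b l)) hb
    have h2 := Finset.add_sum_erase (Finset.univ.filter (fun l : Fin N => l < a))
      (fun l => par n N l) hb
    have hTb : T N a b b = a := by simp [T, ne_of_lt hlt]
    rw [hTb, hcong] at h1
    unfold Y S
    omega
  · apply Finset.sum_congr rfl
    intro l hl
    simp only [mem_filter] at hl
    have hlb : l ≠ b := ne_of_lt hl.2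
    have hla : l ≠ a := ne_of_lt (lt_trans hl.2 hlt)
    simp [T, hla, hlb]

lemma GlnmAux.sign_identity {n N : ℕ} (a b : Fin N) (hab : a ≠ b) :
    (-1 : ℂ) ^ ((par n N a + par n N b) * X n N a b) *
        (-1 : ℂ) ^ ((par n N b + par n N a) * S n N a) =
      (-1 : ℂ) ^ par n N b *
        ((-1 : ℂ) ^ par n N a *
          ((-1 : ℂ) ^ ((par n N b + par n N a) * Y n N a b) *
            (-1 : ℂ) ^ ((par n N a + par n N b) * S n N b))) := by
  rw [← pow_add, ← pow_add, ← pow_add, ← pow_add]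
  apply neg_one_pow_eq
  rcases lt_or_gt_of_ne hab with hlt | hlt
  · obtain ⟨key, hY⟩ := GlnmAux.key_lt a b hlt
    rcases par_cases n N a with hpa | hpa <;> rcases par_cases n N b with hpb | hpb <;>
      rw [hpa, hpb] at key ⊢ <;> rw [hY] <;> omega
  · obtain ⟨key, hX⟩ := GlnmAux.key_gt a b hlt
    rcases par_cases n N a with hpa | hpa <;> rcases par_cases n N b with hpb | hpb <;>
      rw [hpa, hpb] at key ⊢ <;> rw [hX] <;> omega

open Glnm GlnmAux in
theorem highest_configuration_action' (n m : ℕ) (a b : Fin (n + m)) (hab : a ≠ b) :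
    Matrix.mulVec
        (Egen n (n + m) (n + m) a b * Egen n (n + m) (n + m) b a -
          Egen n (n + m) (n + m) a a) (baseVec (n + m)) =
      ((-1 : ℂ) ^ par n (n + m) b) •
        Matrix.mulVec (Pg n (n + m) (n + m) a b) (baseVec (n + m)) := by
  funext x
  rw [Matrix.sub_mulVec]
  simp only [Pi.sub_apply, Pi.smul_apply, smul_eq_mul]
  rw [mulVec_base, mulVec_base, mulVec_base]
  rw [lhs_eval, Egen_abU a b hab, Egen_aa, rhs_eval a b hab, eop_swap a b hab]
  by_cases hx1 : x = idf (n + m)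
  · have hx2 : x ≠ T (n + m) a b := by
      subst hx1
      intro h
      have := congrFun h a
      simp [idf, T] at this
      exact hab this
    rw [if_pos hx1, if_neg hx2, if_neg hx2, if_pos hx1]
    have h2 : (par n (n + m) a + par n (n + m) b) * S n (n + m) a +
        (par n (n + m) b + par n (n + m) a) * S n (n + m) a =
        2 * ((par n (n + m) a + par n (n + m) b) * S n (n + m) a) := by ring
    rw [add_zero, ← pow_add, h2, pow_mul]
    norm_num
  · rw [if_neg hx1, if_neg hx1]
    by_cases hx2 : x = T (n + m) a b
    · rw [if_pos hx2, if_pos hx2, zero_add, sub_zero]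
      exact GlnmAux.sign_identity a b hab
    · rw [if_neg hx2, if_neg hx2]
      simp

end Main

open Glnm in
/-- `(E_{ab}E_{ba} − E_{aa})(e_1 ⊗ ⋯ ⊗ e_N) = (−1)^{p(b)} P_{ab}(e_1 ⊗ ⋯ ⊗ e_N)`
for `k = N = n + m`. -/
theorem highest_configuration_action (n m : ℕ) (a b : Fin (n + m)) (hab : a ≠ b) :
    Matrix.mulVec
        (Egen n (n + m) (n + m) a b * Egen n (n + m) (n + m) b a -
          Egen n (n + m) (n + m) a a) (baseVec (n + m)) =
      ((-1 : ℂ) ^ par n (n + m) b) •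
        Matrix.mulVec (Pg n (n + m) (n + m) a b) (baseVec (n + m)) := by
  exact highest_configuration_action' n m a b hab
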